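/- Let n be a positive integer and consider K_n□K_n with vertex set {0,…,n−1}×{0,…,n−1} ordered lexicographically. Then the First-Fit coloring of (K_n□K_n, lex) assigns to each vertex (i,j) the color (i XOR j) + 1, where XOR denotes bitwise exclusive-or of the binary representations of i and j. -/

import Mathlib

open SimpleGraph

/-- First-Fit (greedy) coloring of `G` with respect to the vertex ordering given by the
injective position function `ord` (vertex `u` comes before `v` iff `ord u < ord v`).
Each vertex receives the smallest positive integer not used on earlier neighbors. -/
noncomputable def firstFit {V : Type*} (G : SimpleGraph V) (ord : V → ℕ) : V → ℕ :=
  (InvImage.wf ord Nat.lt_wfRel.wf).fix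
    (fun v ih => sInf {c : ℕ | 1 ≤ c ∧ ∀ u, ∀ h : ord u < ord v, G.Adj u v → ih u h ≠ c})

/-- `FFColors G ord` is the number of colors used by the First-Fit coloring. -/
noncomputable def FFColors {V : Type*} [Fintype V] (G : SimpleGraph V) (ord : V → ℕ) : ℕ :=
  (Finset.univ.image (firstFit G ord)).card

open Classical in
/-- First-Fit coloring of `(G, ord)` subject to the pre-coloring `C₀` on the set `S`:
vertices of `S` keep their pre-assigned colors and are skipped by the scan; every other
vertex receives the smallest positive integer not already assigned (or pre-assigned)
to a neighbor. -/
noncomputable def firstFitWith {V : Type*} (G : SimpleGraph V) (ord : V → ℕ)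
    (S : Set V) (C₀ : V → ℕ) : V → ℕ :=
  (InvImage.wf ord Nat.lt_wfRel.wf).fix
    (fun v ih =>
      if v ∈ S then C₀ v
      else sInf {c : ℕ | 1 ≤ c ∧ (∀ u, G.Adj u v → u ∈ S → C₀ u ≠ c) ∧
        ∀ u, ∀ h : ord u < ord v, G.Adj u v → u ∉ S → ih u h ≠ c})

/-- Position function of the lexicographic order on `V × W` induced by the position
functions `σ` on `V` and `σ'` on `W` (for injective `σ, σ'`: `(u,v)` comes before
`(u',v')` iff `σ u < σ u'`, or `u = u'` and `σ' v < σ' v'`). -/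
noncomputable def lexPos {V W : Type*} [Fintype W] (σ : V → ℕ) (σ' : W → ℕ) : V × W → ℕ :=
  fun p => σ p.1 * (Finset.univ.sup σ' + 1) + σ' p.2

/-- A proper coloring with colors in the positive integers. -/
def IsProperColoring {V : Type*} (G : SimpleGraph V) (C : V → ℕ) : Prop :=
  (∀ v, 1 ≤ C v) ∧ ∀ ⦃u v⦄, G.Adj u v → C u ≠ C v

/-- `D` is a `(C, ord)`-descent: `D = {v} ∪ N` where `C v = y`, `x < y` is a (positive)
color, `N` is the set of neighbors of `v` of color `x`, and every `u ∈ N` comes after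
`v` in the order. -/
def IsDescent {V : Type*} (G : SimpleGraph V) (ord : V → ℕ) (C : V → ℕ) (D : Set V) : Prop :=
  ∃ v x, 1 ≤ x ∧ x < C v ∧
    (∀ u, G.Adj u v → C u = x → ord v < ord u) ∧
    D = insert v {u | G.Adj u v ∧ C u = x}

/-- The Grundy number: the maximum of `FFColors G ord` over all vertex orderings. -/
noncomputable def grundy {V : Type*} [Fintype V] (G : SimpleGraph V) : ℕ :=
  sSup {n | ∃ ord : V → ℕ, Function.Injective ord ∧ FFColors G ord = n}

/-- The independence number of `G`. -/
noncomputable def indepNum {V : Type*} [Fintype V] (G : SimpleGraph V) : ℕ :=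
  sSup {n | ∃ s : Finset V, (∀ u ∈ s, ∀ v ∈ s, ¬ G.Adj u v) ∧ s.card = n}

/-- An `m × n` Latin rectangle: entries in `{1, …, n}`, no repeats in rows or columns. -/
def IsLatinRectangle {m n : ℕ} (R : Fin m → Fin n → ℕ) : Prop :=
  (∀ i j, R i j ∈ Finset.Icc 1 n) ∧ (∀ i, Function.Injective (R i)) ∧
    (∀ j, Function.Injective (fun i => R i j))

/-- `S` is a greedy defining set of the rectangle `R` (cells scanned in lexicographic,
i.e. row-by-row, order): the greedy completion, which skips the cells of `S` (fixed to
their values in `R`) and places in each other cell the smallest positive integer not yet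
appearing in its row or column, reproduces `R`.  This is First-Fit on the rook's graph
`K_m □ K_n` subject to the pre-coloring of `S` by `R`. -/
noncomputable def IsRectGDS {m n : ℕ} (R : Fin m → Fin n → ℕ) (S : Set (Fin m × Fin n)) : Prop :=
  firstFitWith ((⊤ : SimpleGraph (Fin m)).boxProd (⊤ : SimpleGraph (Fin n)))
    (lexPos Fin.val Fin.val) S (fun p => R p.1 p.2) = fun p => R p.1 p.2

/-- The Latin square `L_k` of order `2^k`: the entry in row `i`, column `j` is
`2^k - (i XOR j)`; equivalently the `k`-fold tensor product of `[[2,1],[1,2]]`. -/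
def Lsquare (k : ℕ) : Fin (2 ^ k) → Fin (2 ^ k) → ℕ :=
  fun i j => 2 ^ k - (i.val ^^^ j.val)
lemma mul_add_lt_iff' {B a b c d : ℕ} (hb : b < B) (hd : d < B) :
    a * B + b < c * B + d ↔ a < c ∨ (a = c ∧ b < d) := by
  constructor
  · intro h
    rcases lt_trichotomy a c with h1 | h1 | h1
    · exact Or.inl h1
    · exact Or.inr ⟨h1, by subst h1; omega⟩
    · exfalso
      have h2 : (c + 1) * B ≤ a * B := Nat.mul_le_mul_right B h1
      have h3 : (c + 1) * B = c * B + B := by ring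
      omega
  · rintro (h1 | ⟨rfl, h2⟩)
    · have h2 : (a + 1) * B ≤ c * B := Nat.mul_le_mul_right B h1
      have h3 : (a + 1) * B = a * B + B := by ring
      omega
    · omega

lemma lexPos_lt_iff {n : ℕ} (u p : Fin n × Fin n) :
    lexPos Fin.val Fin.val u < lexPos Fin.val Fin.val p ↔
      u.1.val < p.1.val ∨ (u.1 = p.1 ∧ u.2.val < p.2.val) := by
  have hb : u.2.val < Finset.univ.sup (Fin.val (n := n)) + 1 :=
    Nat.lt_succ_of_le (Finset.le_sup (Finset.mem_univ _))
  have hd : p.2.val < Finset.univ.sup (Fin.val (n := n)) + 1 :=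
    Nat.lt_succ_of_le (Finset.le_sup (Finset.mem_univ _))
  rw [lexPos, lexPos, mul_add_lt_iff' hb hd, Fin.val_eq_val]

lemma firstFit_xor (n : ℕ) (p : Fin n × Fin n) :
    firstFit ((⊤ : SimpleGraph (Fin n)).boxProd (⊤ : SimpleGraph (Fin n)))
      (lexPos Fin.val Fin.val) p = (p.1.val ^^^ p.2.val) + 1 := by
  set G := ((⊤ : SimpleGraph (Fin n)).boxProd (⊤ : SimpleGraph (Fin n))) with hG
  set ord : Fin n × Fin n → ℕ := lexPos Fin.val Fin.val with hord
  suffices H : ∀ N : ℕ, ∀ p : Fin n × Fin n, ord p < N →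
      firstFit G ord p = (p.1.val ^^^ p.2.val) + 1 by
    exact H (ord p + 1) p (Nat.lt_succ_self _)
  intro N
  induction N with
  | zero => intro p hp; omega
  | succ N ih =>
    intro p hp
    have hunfold : firstFit G ord p =
        sInf {c : ℕ | 1 ≤ c ∧ ∀ u, ∀ h : ord u < ord p, G.Adj u p → firstFit G ord u ≠ c} := by
      rw [firstFit, WellFounded.fix_eq]
    rw [hunfold]
    have hEN : ∀ u : Fin n × Fin n, ord u < ord p → G.Adj u p →
        (u.1 = p.1 ∧ u.2.val < p.2.val) ∨ (u.2 = p.2 ∧ u.1.val < p.1.val) := by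
      intro u hlt hadj
      rw [hG, boxProd_adj] at hadj
      rw [hord, lexPos_lt_iff] at hlt
      simp only [top_adj] at hadj
      rcases hadj with ⟨h1, h2⟩ | ⟨h1, h2⟩
      · right
        refine ⟨h2, ?_⟩
        rcases hlt with h | ⟨h, _⟩
        · exact h
        · exact absurd h h1
      · left
        refine ⟨h2, ?_⟩
        rcases hlt with h | ⟨_, h'⟩
        · exact absurd (congrArg Fin.val h2) (Nat.ne_of_lt h)
        · exact h'
    have hmem : (p.1.val ^^^ p.2.val) + 1 ∈
        {c : ℕ | 1 ≤ c ∧ ∀ u, ∀ h : ord u < ord p, G.Adj u p → firstFit G ord u ≠ c} := by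
      refine ⟨Nat.le_add_left 1 _, fun u hlt hadj hc => ?_⟩
      have hu := ih u (lt_of_lt_of_le hlt (Nat.lt_succ_iff.mp hp))
      rw [hu] at hc
      have hxor : u.1.val ^^^ u.2.val = p.1.val ^^^ p.2.val := by omega
      rcases hEN u hlt hadj with ⟨h1, h2⟩ | ⟨h1, h2⟩
      · rw [h1, Nat.xor_right_inj] at hxor; omega
      · rw [h1, Nat.xor_left_inj] at hxor; omega
    refine le_antisymm (Nat.sInf_le hmem) (le_csInf ⟨_, hmem⟩ ?_)
    intro c hc
    by_contra hlt'
    push_neg at hlt'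
    obtain ⟨hc1, hc2⟩ := hc
    set x := c - 1 with hx
    have hxlt : x < p.1.val ^^^ p.2.val := by omega
    rcases Nat.lt_xor_cases hxlt with h | h
    · -- x ^^^ p.2 < p.1 : use u = (x ^^^ p.2, p.2)
      have hn2 : x ^^^ p.2.val < n := lt_trans h p.1.isLt
      set u : Fin n × Fin n := (⟨x ^^^ p.2.val, hn2⟩, p.2) with hu
      have hne : u.1 ≠ p.1 := by
        intro hcon
        have h5 : x ^^^ p.2.val = p.1.val := congrArg Fin.val hcon
        omega
      have hadj : G.Adj u p := by
        rw [hG, boxProd_adj]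
        left
        simp only [top_adj]
        exact ⟨hne, rfl⟩
      have hlt : ord u < ord p := by
        rw [hord, lexPos_lt_iff]; exact Or.inl h
      have hh := hc2 u hlt hadj
      rw [ih u (lt_of_lt_of_le hlt (Nat.lt_succ_iff.mp hp))] at hh
      apply hh
      show ((x ^^^ p.2.val) ^^^ p.2.val) + 1 = c
      rw [Nat.xor_assoc, Nat.xor_self, Nat.xor_zero]
      omega
    · -- x ^^^ p.1 < p.2 : use u = (p.1, x ^^^ p.1)
      have hn2 : x ^^^ p.1.val < n := lt_trans h p.2.isLt
      set u : Fin n × Fin n := (p.1, ⟨x ^^^ p.1.val, hn2⟩) with hu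
      have hne : u.2 ≠ p.2 := by
        intro hcon
        have h5 : x ^^^ p.1.val = p.2.val := congrArg Fin.val hcon
        omega
      have hadj : G.Adj u p := by
        rw [hG, boxProd_adj]
        right
        simp only [top_adj]
        exact ⟨hne, rfl⟩
      have hlt : ord u < ord p := by
        rw [hord, lexPos_lt_iff]; exact Or.inr ⟨rfl, h⟩
      have hh := hc2 u hlt hadj
      rw [ih u (lt_of_lt_of_le hlt (Nat.lt_succ_iff.mp hp))] at hh
      apply hh
      show (p.1.val ^^^ (x ^^^ p.1.val)) + 1 = c
      rw [Nat.xor_comm x, ← Nat.xor_assoc, Nat.xor_self, Nat.zero_xor]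
      omega

/-- The First-Fit coloring of `(K_n □ K_n, lex)` assigns to the vertex
`(i, j)` the color `(i XOR j) + 1`. -/
theorem firstFit_complete_boxProd_self_lex (n : ℕ) (hn : 0 < n) :
    firstFit ((⊤ : SimpleGraph (Fin n)).boxProd (⊤ : SimpleGraph (Fin n)))
      (lexPos Fin.val Fin.val) = fun p => (p.1.val ^^^ p.2.val) + 1 := by
  funext p
  exact firstFit_xor n p
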